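/- Let l ≥ 4 be a natural number and let X : Fin l → ℝ be i.i.d. standard normal random variables (distributed according to the product over Fin l of the real Gaussian measure N(0,1)). For every real t with 0 ≤ t ≤ 2 ln l, the probability that X_i ≤ √(2 ln l − t) for every i ∈ Fin l is at most exp( − e^{t/2} / ( √(2π) · (√(2 ln l) + 1) ) ). -/

import Mathlib

open MeasureTheory ProbabilityTheory Real Set Filter

lemma gauss_integrable : MeasureTheory.Integrable (fun x : ℝ => Real.exp (-x^2/2)) := by
  have h := integrable_exp_neg_mul_sq (by norm_num : (0:ℝ) < 1/2)
  have he : (fun x : ℝ => Real.exp (-x^2/2)) = fun x : ℝ => Real.exp (-(1/2) * x^2) := by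
    ext x; congr 1; ring
  rw [he]; exact h

lemma gauss_tail_lb {u : ℝ} (hu : 0 ≤ u) :
    Real.exp (-u^2/2) / (u+1) ≤ ∫ x in Set.Ioi u, Real.exp (-x^2/2) := by
  set F : ℝ → ℝ := fun x => -Real.exp (-x^2/2) / (x+1) with hF
  set F' : ℝ → ℝ := fun x => Real.exp (-x^2/2) * (x^2+x+1) / (x+1)^2 with hF'
  have hle : ∀ x ∈ Ioi u, F' x ≤ Real.exp (-x^2/2) := by
    intro x hx
    have hx0 : (0:ℝ) ≤ x := le_trans hu (le_of_lt hx)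
    rw [hF', div_le_iff₀ (by positivity)]
    have h1 : x^2+x+1 ≤ (x+1)^2 := by nlinarith
    calc Real.exp (-x^2/2) * (x^2+x+1) ≤ Real.exp (-x^2/2) * (x+1)^2 := by
          exact mul_le_mul_of_nonneg_left h1 (Real.exp_pos _).le
      _ = _ := rfl
  have hnn : ∀ x ∈ Ioi u, 0 ≤ F' x := by
    intro x hx
    have hx0 : (0:ℝ) ≤ x := le_trans hu (le_of_lt hx)
    rw [hF']; positivity
  have hderiv : ∀ x ∈ Ici u, HasDerivAt F (F' x) x := by
    intro x hx
    have hx0 : (0:ℝ) ≤ x := le_trans hu hx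
    have hx1 : x + 1 ≠ 0 := by positivity
    have h1 : HasDerivAt (fun y : ℝ => -y^2/2) (-x) x := by
      have h := ((hasDerivAt_pow 2 x).neg.div_const 2)
      refine h.congr_deriv ?_
      push_cast
      ring
    have h2 := h1.exp
    have h3 := (h2.neg).div ((hasDerivAt_id x).add_const 1) hx1
    refine h3.congr_deriv ?_
    rw [hF']
    simp only [id, Pi.neg_apply]
    field_simp
    ring
  have htend : Tendsto F atTop (nhds 0) := by
    have h1 : Tendsto (fun x : ℝ => Real.exp (-x^2/2)) atTop (nhds 0) := by
      apply Real.tendsto_exp_atBot.comp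
      have : Tendsto (fun x : ℝ => x^2/2) atTop atTop :=
        (tendsto_pow_atTop two_ne_zero).atTop_div_const (by norm_num)
      exact tendsto_neg_atBot_iff.mpr this |>.congr (fun x => by ring)
    have h2 : Tendsto (fun x : ℝ => (x+1)⁻¹) atTop (nhds 0) :=
      tendsto_inv_atTop_zero.comp (tendsto_atTop_add_const_right _ 1 tendsto_id)
    have h3 := (h1.mul h2).neg
    simp only [mul_zero, neg_zero] at h3
    apply h3.congr
    intro x
    simp only [hF]
    ring
  have hF'meas : AEStronglyMeasurable F' (volume.restrict (Ioi u)) := by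
    apply Measurable.aestronglyMeasurable
    fun_prop
  have hF'int : IntegrableOn F' (Ioi u) := by
    apply Integrable.mono (gauss_integrable.restrict (s := Ioi u)) hF'meas
    rw [ae_restrict_iff' measurableSet_Ioi]
    filter_upwards with x hx
    rw [Real.norm_eq_abs, Real.norm_eq_abs, abs_of_nonneg (hnn x hx),
      abs_of_nonneg (Real.exp_pos _).le]
    exact hle x hx
  have hFTC := integral_Ioi_of_hasDerivAt_of_tendsto' hderiv hF'int htend
  have h0 : Real.exp (-u^2/2) / (u+1) = ∫ x in Set.Ioi u, F' x := by
    rw [hFTC, hF]; ring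
  rw [h0]
  exact setIntegral_mono_on hF'int gauss_integrable.restrict measurableSet_Ioi hle

lemma gaussPDF_eq : gaussianPDFReal 0 1 = fun x : ℝ => (Real.sqrt (2*π))⁻¹ * Real.exp (-x^2/2) := by
  ext x
  simp [gaussianPDFReal]

theorem gaussian_max_lower_tail_bound (l : ℕ) (hl : 4 ≤ l) (t : ℝ) (ht0 : 0 ≤ t)
    (ht1 : t ≤ 2 * Real.log l) :
    (Measure.pi fun _ : Fin l => gaussianReal 0 1)
        {X : Fin l → ℝ | ∀ i : Fin l, X i ≤ Real.sqrt (2 * Real.log l - t)} ≤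
      ENNReal.ofReal
        (Real.exp (-(Real.exp (t / 2) /
          (Real.sqrt (2 * Real.pi) * (Real.sqrt (2 * Real.log l) + 1))))) := by
  have hl1 : (1:ℝ) ≤ l := by exact_mod_cast le_trans (by norm_num) hl
  have hlpos : (0:ℝ) < l := by linarith
  set u : ℝ := Real.sqrt (2 * Real.log l - t) with hu
  have hu0 : 0 ≤ u := Real.sqrt_nonneg _
  have harg : 0 ≤ 2 * Real.log l - t := by linarith
  have hu2 : u^2 = 2 * Real.log l - t := Real.sq_sqrt harg
  set s : ℝ := Real.sqrt (2 * Real.log l) with hs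
  have hus : u ≤ s := Real.sqrt_le_sqrt (by linarith)
  set c : ℝ := Real.sqrt (2 * Real.pi) with hc
  have hcpos : 0 < c := Real.sqrt_pos.mpr (by positivity)
  -- rewrite the set as a product
  have hset : {X : Fin l → ℝ | ∀ i : Fin l, X i ≤ u} =
      Set.pi Set.univ (fun _ : Fin l => Set.Iic u) := by
    ext X; simp [Set.mem_pi, Pi.le_def]
  rw [hset, Measure.pi_pi]
  set p : ℝ := ∫ x in Set.Iic u, gaussianPDFReal 0 1 x with hp
  set q : ℝ := ∫ x in Set.Ioi u, gaussianPDFReal 0 1 x with hq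
  have happly : gaussianReal 0 1 (Set.Iic u) = ENNReal.ofReal p :=
    gaussianReal_apply_eq_integral 0 one_ne_zero _
  have hp0 : 0 ≤ p :=
    setIntegral_nonneg measurableSet_Iic (fun x _ => gaussianPDFReal_nonneg 0 1 x)
  have hpq : p + q = 1 := by
    rw [hp, hq, intervalIntegral.integral_Iic_add_Ioi (integrable_gaussianPDFReal 0 1).integrableOn
      (integrable_gaussianPDFReal 0 1).integrableOn,
      integral_gaussianPDFReal_eq_one 0 one_ne_zero]
  -- lower bound on q
  have hqlb : Real.exp (t/2) / ((l:ℝ) * (c * (u+1))) ≤ q := by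
    have h1 : Real.exp (-u^2/2) / (u+1) ≤ ∫ x in Set.Ioi u, Real.exp (-x^2/2) :=
      gauss_tail_lb hu0
    have h2 : q = c⁻¹ * ∫ x in Set.Ioi u, Real.exp (-x^2/2) := by
      rw [hq, gaussPDF_eq, integral_const_mul]
    have h3 : Real.exp (-u^2/2) = Real.exp (t/2) / l := by
      rw [hu2]
      rw [show -(2 * Real.log l - t)/2 = t/2 - Real.log l by ring, Real.exp_sub,
        Real.exp_log hlpos]
    have h4 : Real.exp (t/2) / ((l:ℝ) * (c * (u+1))) = c⁻¹ * (Real.exp (-u^2/2)/(u+1)) := by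
      rw [h3]
      field_simp
    rw [h2, h4]
    exact mul_le_mul_of_nonneg_left h1 (by positivity)
  rw [happly, Finset.prod_const, Finset.card_univ, Fintype.card_fin,
    ← ENNReal.ofReal_pow hp0]
  apply ENNReal.ofReal_le_ofReal
  have hTq : Real.exp (t/2) / (c * (s+1)) ≤ (l:ℝ) * q := by
    have h5 : (l:ℝ) * (Real.exp (t/2) / ((l:ℝ) * (c*(u+1)))) = Real.exp (t/2)/(c*(u+1)) := by
      field_simp
    have h6 := mul_le_mul_of_nonneg_left hqlb (le_of_lt hlpos)
    rw [h5] at h6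
    refine le_trans ?_ h6
    gcongr
  have hpe : p ≤ Real.exp (-q) := by
    have := Real.add_one_le_exp (-q)
    linarith
  calc p ^ l ≤ Real.exp (-q) ^ l := pow_le_pow_left₀ hp0 hpe l
    _ = Real.exp ((l:ℝ) * (-q)) := (Real.exp_nat_mul _ l).symm
    _ ≤ Real.exp (-(Real.exp (t/2)/(c*(s+1)))) := by
        apply Real.exp_le_exp.mpr
        rw [mul_neg]
        linarith
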